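/- arXiv:1308.0514 — 3 statements merged into one kernel-verified Lean document; each statement's English description precedes it below -/
import Mathlib

section
/- A safe copy migration is order-independent: fix a data store state ds, a source kind c₁, a target kind c₂, a property name n, and property names a and b defining the join condition (a source entity e matches a target entity f iff the value of property a in e equals the value of property b in f, both being defined). Suppose the copy operation is safe on ds, i.e., for every entity f of kind c₂, all entities e of kind c₁ that match f and have property n defined assign the same value to property n. Then for every enumeration (list ordering) of the matching source–target pairs, performing the corresponding sequence of create-or-replace updates of property n in the target entities yields the same final data store state, namely the state in which every target entity f of kind c₂ with at least one matching source entity has property n set to the common value of property n over its matching source entities, and all other entities are unchanged. -/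
set_option linter.unusedSectionVars false

section Aux

variable {Kind Id PName PVal : Type}
variable [DecidableEq Kind] [DecidableEq Id] [DecidableEq PName] [DecidableEq PVal]

private abbrev SCEnt (Kind Id PName PVal : Type) :=
  (Kind × Id) × Finmap (fun _ : PName => PVal)

private def scf (n : PName) (p : SCEnt Kind Id PName PVal)
    (q : SCEnt Kind Id PName PVal × SCEnt Kind Id PName PVal) :
    SCEnt Kind Id PName PVal :=
  if p.1 = q.2.1
  then (p.1, (q.1.2.lookup n).elim p.2 (fun w => p.2.insert n w))
  else p

private lemma sc_foldl_image (n : PName)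
    (step : Finset (SCEnt Kind Id PName PVal) →
      SCEnt Kind Id PName PVal × SCEnt Kind Id PName PVal →
      Finset (SCEnt Kind Id PName PVal))
    (hstep : ∀ s q, step s q = s.image (fun p => scf n p q)) :
    ∀ (l : List (SCEnt Kind Id PName PVal × SCEnt Kind Id PName PVal))
      (s : Finset (SCEnt Kind Id PName PVal)),
      l.foldl step s = s.image (fun p => l.foldl (scf n) p) := by
  intro l
  induction l with
  | nil => intro s; simp [Finset.image_id']
  | cons q l ih =>
    intro s
    rw [List.foldl_cons, ih, hstep, Finset.image_image]
    rfl

variable {n : PName} {ds : Finset (SCEnt Kind Id PName PVal)}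
  {MP : SCEnt Kind Id PName PVal × SCEnt Kind Id PName PVal → Prop}
  (hds : ∀ p ∈ ds, ∀ q ∈ ds, p.1 = q.1 → p = q)
  (hMPds : ∀ q, MP q → q.2 ∈ ds)
  (hsafe : ∀ e₁ e₂ f, MP (e₁, f) → MP (e₂, f) →
      ∀ w₁ w₂, e₁.2.lookup n = some w₁ → e₂.2.lookup n = some w₂ → w₁ = w₂)
  {p : SCEnt Kind Id PName PVal} (hp : p ∈ ds)

include hds hMPds hsafe hp

/-- Once the target has been updated, further matching updates fix it. -/
private lemma scf_fix {e₀ : SCEnt Kind Id PName PVal} {w₀ : PVal}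
    (he₀ : MP (e₀, p)) (hw₀ : e₀.2.lookup n = some w₀) :
    ∀ l : List (SCEnt Kind Id PName PVal × SCEnt Kind Id PName PVal),
      (∀ q ∈ l, MP q) →
      l.foldl (scf n) (p.1, p.2.insert n w₀) = (p.1, p.2.insert n w₀) := by
  intro l
  induction l with
  | nil => intro _; rfl
  | cons q l ih =>
    intro hl
    have hq : MP q := hl q List.mem_cons_self
    have hstep : scf n (p.1, p.2.insert n w₀) q = (p.1, p.2.insert n w₀) := by
      unfold scf
      by_cases hkey : (p.1, p.2.insert n w₀).1 = q.2.1
      · have hq2 : q.2 = p := hds q.2 (hMPds q hq) p hp hkey.symm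
        rcases hlk : q.1.2.lookup n with _ | w
        · simp [hlk, ← hkey]
        · have hMPq1 : MP (q.1, p) := by rw [← hq2]; exact hq
          have : w = w₀ := hsafe q.1 e₀ p hMPq1 he₀ w w₀ hlk hw₀
          subst this
          simp [hkey, hlk, Finmap.insert_insert]
      · simp [hkey]
    rw [List.foldl_cons, hstep, ih (fun q hq => hl q (List.mem_cons_of_mem _ hq))]

/-- If some matching pair defining `n` occurs in the list, the target gets updated. -/
private lemma scf_hit {e₀ : SCEnt Kind Id PName PVal} {w₀ : PVal}
    (he₀ : MP (e₀, p)) (hw₀ : e₀.2.lookup n = some w₀) :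
    ∀ l : List (SCEnt Kind Id PName PVal × SCEnt Kind Id PName PVal),
      (∀ q ∈ l, MP q) → (e₀, p) ∈ l →
      l.foldl (scf n) p = (p.1, p.2.insert n w₀) := by
  intro l
  induction l with
  | nil => intro _ h; simp at h
  | cons q l ih =>
    intro hl hmem
    have hq : MP q := hl q List.mem_cons_self
    have hltail : ∀ q ∈ l, MP q := fun q hq => hl q (List.mem_cons_of_mem _ hq)
    rw [List.foldl_cons]
    by_cases hkey : p.1 = q.2.1
    · have hq2 : q.2 = p := hds q.2 (hMPds q hq) p hp hkey.symm
      rcases hlk : q.1.2.lookup n with _ | w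
      · have : scf n p q = p := by unfold scf; simp [hlk, ← hkey]
        rw [this]
        have hmem' : (e₀, p) ∈ l := by
          rcases List.mem_cons.mp hmem with h | h
          · exfalso
            rw [← h] at hlk
            simp [hw₀] at hlk
          · exact h
        exact ih hltail hmem'
      · have hMPq1 : MP (q.1, p) := by rw [← hq2]; exact hq
        have hww : w = w₀ := hsafe q.1 e₀ p hMPq1 he₀ w w₀ hlk hw₀
        subst hww
        have : scf n p q = (p.1, p.2.insert n w) := by unfold scf; simp [hkey, hlk]
        rw [this]
        exact scf_fix hds hMPds hsafe hp he₀ hw₀ l hltail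
    · have : scf n p q = p := by unfold scf; simp [hkey]
      rw [this]
      have hmem' : (e₀, p) ∈ l := by
        rcases List.mem_cons.mp hmem with h | h
        · exfalso; apply hkey; rw [← h]
        · exact h
      exact ih hltail hmem'

/-- If no matching source defines `n`, the target is unchanged. -/
private lemma scf_miss (hno : ¬ ∃ e w, MP (e, p) ∧ e.2.lookup n = some w) :
    ∀ l : List (SCEnt Kind Id PName PVal × SCEnt Kind Id PName PVal),
      (∀ q ∈ l, MP q) → l.foldl (scf n) p = p := by
  intro l
  induction l with
  | nil => intro _; rfl
  | cons q l ih =>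
    intro hl
    have hq : MP q := hl q List.mem_cons_self
    have hstep : scf n p q = p := by
      unfold scf
      by_cases hkey : p.1 = q.2.1
      · have hq2 : q.2 = p := hds q.2 (hMPds q hq) p hp hkey.symm
        rcases hlk : q.1.2.lookup n with _ | w
        · simp [hlk, ← hkey]
        · exfalso
          exact hno ⟨q.1, w, by rw [← hq2]; exact hq, hlk⟩
      · simp [hkey]
    rw [List.foldl_cons, hstep, ih (fun q hq => hl q (List.mem_cons_of_mem _ hq))]



end Aux



/-!
A data store state is modeled as a finite set of bindings
(entity key ↦ entity value) with pairwise distinct keys, where an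
entity key is a pair (kind, id) and an entity value is a finite
partial map (`Finmap`) from property names to property values.

`MP (e, f)` says that `(e, f)` is a matching source–target pair of
the copy operation on `ds`: `e` is an entity of kind `c₁` in `ds`,
`f` is an entity of kind `c₂` in `ds`, and the join condition holds
(property `a` of `e` and property `b` of `f` are both defined and
equal).  `step s (e, f)` performs, on state `s`, the create-or-replace
update of property `n` in the target entity with key `f.1`, setting it
to the value of property `n` in the source entity `e` (a no-op if `e`
does not define `n`).

Assuming the copy operation is safe on `ds` (all matching source
entities of a given target that define `n` agree on the value of `n`),
the theorem states: (i) any two enumerations (duplicate-free lists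
listing exactly the matching pairs) yield the same final state; and
(ii) this final state is the one in which every target entity with at
least one matching source entity defining `n` has property `n` set to
the common value, and every other entity is unchanged.
-/
theorem safe_copy_order_independent
    {Kind Id PName PVal : Type}
    [DecidableEq Kind] [DecidableEq Id] [DecidableEq PName] [DecidableEq PVal]
    (ds : Finset ((Kind × Id) × Finmap (fun _ : PName => PVal)))
    (hds : ∀ p ∈ ds, ∀ q ∈ ds, p.1 = q.1 → p = q)
    (c₁ c₂ : Kind) (n a b : PName)
    (MP : ((Kind × Id) × Finmap (fun _ : PName => PVal)) ×
          ((Kind × Id) × Finmap (fun _ : PName => PVal)) → Prop)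
    (hMP : ∀ q, MP q ↔
      q.1 ∈ ds ∧ q.2 ∈ ds ∧ q.1.1.1 = c₁ ∧ q.2.1.1 = c₂ ∧
      ∃ w, q.1.2.lookup a = some w ∧ q.2.2.lookup b = some w)
    (step : Finset ((Kind × Id) × Finmap (fun _ : PName => PVal)) →
            ((Kind × Id) × Finmap (fun _ : PName => PVal)) ×
            ((Kind × Id) × Finmap (fun _ : PName => PVal)) →
            Finset ((Kind × Id) × Finmap (fun _ : PName => PVal)))
    (hstep : ∀ s q, step s q = s.image (fun p =>
      if p.1 = q.2.1
      then (p.1, (q.1.2.lookup n).elim p.2 (fun w => p.2.insert n w))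
      else p))
    (hsafe : ∀ e₁ e₂ f, MP (e₁, f) → MP (e₂, f) →
      ∀ w₁ w₂, e₁.2.lookup n = some w₁ → e₂.2.lookup n = some w₂ →
      w₁ = w₂) :
    (∀ l₁ l₂ : List (((Kind × Id) × Finmap (fun _ : PName => PVal)) ×
                     ((Kind × Id) × Finmap (fun _ : PName => PVal))),
      l₁.Nodup → l₂.Nodup →
      (∀ q, q ∈ l₁ ↔ MP q) → (∀ q, q ∈ l₂ ↔ MP q) →
      l₁.foldl step ds = l₂.foldl step ds) ∧
    (∀ l : List (((Kind × Id) × Finmap (fun _ : PName => PVal)) ×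
                 ((Kind × Id) × Finmap (fun _ : PName => PVal))),
      l.Nodup → (∀ q, q ∈ l ↔ MP q) →
      ∀ p ∈ ds,
        (∀ w, (∃ e, MP (e, p) ∧ e.2.lookup n = some w) →
          (p.1, p.2.insert n w) ∈ l.foldl step ds) ∧
        ((¬ ∃ e w, MP (e, p) ∧ e.2.lookup n = some w) →
          p ∈ l.foldl step ds)) := by
   classical
  have hMPds : ∀ q, MP q → q.2 ∈ ds := fun q hq => ((hMP q).mp hq).2.1
  have hstep' : ∀ s q, step s q = s.image (fun p => scf n p q) := by
    intro s q; rw [hstep]; rfl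
  have hfold := sc_foldl_image n step hstep'
  set F : SCEnt Kind Id PName PVal → SCEnt Kind Id PName PVal :=
    fun p => if h : ∃ w, ∃ e, MP (e, p) ∧ e.2.lookup n = some w
      then (p.1, p.2.insert n h.choose) else p with hF
  have key : ∀ l : List (SCEnt Kind Id PName PVal × SCEnt Kind Id PName PVal), (∀ q, q ∈ l ↔ MP q) → ∀ p ∈ ds,
      l.foldl (scf n) p = F p := by
    intro l hl p hp
    by_cases h : ∃ w, ∃ e, MP (e, p) ∧ e.2.lookup n = some w
    · obtain ⟨e₀, he₀, hw₀⟩ := h.choose_spec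
      have hres := scf_hit hds hMPds hsafe hp he₀ hw₀ l
        (fun q hq => (hl q).mp hq) ((hl _).mpr he₀)
      rw [hres, hF]
      simp only [dif_pos h]
    · have hno : ¬∃ e w, MP (e, p) ∧ e.2.lookup n = some w := by
        rintro ⟨e, w, hmp, hlk⟩; exact h ⟨w, e, hmp, hlk⟩
      rw [scf_miss hds hMPds hsafe hp hno l (fun q hq => (hl q).mp hq), hF]
      simp only [dif_neg h]
  have hfinal : ∀ l : List (SCEnt Kind Id PName PVal × SCEnt Kind Id PName PVal), (∀ q, q ∈ l ↔ MP q) → l.foldl step ds = ds.image F := by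
    intro l hl
    rw [hfold]
    exact Finset.image_congr (fun p hp => key l hl p hp)
  constructor
  · intro l₁ l₂ _ _ h₁ h₂
    rw [hfinal l₁ h₁, hfinal l₂ h₂]
  · intro l _ hl p hp
    rw [hfinal l hl]
    constructor
    · rintro w ⟨e, he, hlk⟩
      have h : ∃ w, ∃ e, MP (e, p) ∧ e.2.lookup n = some w := ⟨w, e, he, hlk⟩
      obtain ⟨e', he', hlk'⟩ := h.choose_spec
      have hcw : h.choose = w := hsafe e' e p he' he _ _ hlk' hlk
      have hFp : F p = (p.1, p.2.insert n w) := by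
        rw [hF]; simp only [dif_pos h, hcw]
      rw [← hFp]
      exact Finset.mem_image_of_mem F hp
    · intro hno
      have h : ¬∃ w, ∃ e, MP (e, p) ∧ e.2.lookup n = some w := by
        rintro ⟨w, e, hmp, hlk⟩; exact hno ⟨e, w, hmp, hlk⟩
      have hFp : F p = p := by rw [hF]; simp only [dif_neg h]
      have := Finset.mem_image_of_mem F hp
      rwa [hFp] at this
end

section
/- An unsafe copy migration can be order-dependent: there exist a data store state ds, a source kind c₁, a target kind c₂, a property name n, and two enumerations (list orderings) of the pairs consisting of a source entity of kind c₁ and a target entity of kind c₂ (i.e., the copy is specified as a cross product without any join restriction), such that performing the corresponding sequences of create-or-replace updates — setting property n of the target entity to the value of property n in the source entity — yields two different final data store states. -/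
/-!
A data store state is modeled as a finite set of bindings
(entity key ↦ entity value) with pairwise distinct keys, where an
entity key is a pair (kind, id) drawn from ℕ × ℕ and an entity value
is a finite partial map (`Finmap`) from property names (ℕ) to
property values (ℕ).

A copy operation without join restriction copies property `n` from
every source entity of kind `c₁` to every target entity of kind `c₂`:
each elementary update is the create-or-replace update of property
`n` in the target entity, setting it to the value of property `n` in
the source entity.  The theorem states that there exist a data store
state `ds`, kinds `c₁, c₂`, a property name `n`, and two enumerations
`l₁, l₂` (duplicate-free lists listing exactly the cross-product
source–target pairs) such that performing the corresponding sequences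
of updates yields two different final states.
-/

private def uE1 : (ℕ × ℕ) × Finmap (fun _ : ℕ => ℕ) := ((0,0), Finmap.singleton 0 1)
private def uE2 : (ℕ × ℕ) × Finmap (fun _ : ℕ => ℕ) := ((0,1), Finmap.singleton 0 2)
private def uT  : (ℕ × ℕ) × Finmap (fun _ : ℕ => ℕ) := ((1,0), ∅)
private def uDS : Finset ((ℕ × ℕ) × Finmap (fun _ : ℕ => ℕ)) := {uE1, uE2, uT}

private lemma uMem (q : (((ℕ × ℕ) × Finmap (fun _ : ℕ => ℕ)) ×
                     ((ℕ × ℕ) × Finmap (fun _ : ℕ => ℕ)))) :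
    q ∈ [(uE1, uT), (uE2, uT)] ↔
      (q.1 ∈ uDS ∧ q.2 ∈ uDS ∧ q.1.1.1 = 0 ∧ q.2.1.1 = 1) := by
  obtain ⟨a, b⟩ := q
  simp only [List.mem_cons, List.mem_singleton, List.not_mem_nil, or_false,
    Prod.mk.injEq, uDS, Finset.mem_insert, Finset.mem_singleton]
  constructor
  · rintro (⟨rfl, rfl⟩ | ⟨rfl, rfl⟩) <;> simp [uE1, uE2, uT]
  · rintro ⟨(rfl | rfl | rfl), (rfl | rfl | rfl), h1, h2⟩ <;>
      simp_all [uE1, uE2, uT]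

theorem unsafe_copy_order_dependent :
    ∃ (ds : Finset ((ℕ × ℕ) × Finmap (fun _ : ℕ => ℕ)))
      (c₁ c₂ n : ℕ)
      (l₁ l₂ : List (((ℕ × ℕ) × Finmap (fun _ : ℕ => ℕ)) ×
                     ((ℕ × ℕ) × Finmap (fun _ : ℕ => ℕ)))),
      (∀ p ∈ ds, ∀ q ∈ ds, p.1 = q.1 → p = q) ∧
      l₁.Nodup ∧ l₂.Nodup ∧
      (∀ q, q ∈ l₁ ↔
        (q.1 ∈ ds ∧ q.2 ∈ ds ∧ q.1.1.1 = c₁ ∧ q.2.1.1 = c₂)) ∧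
      (∀ q, q ∈ l₂ ↔
        (q.1 ∈ ds ∧ q.2 ∈ ds ∧ q.1.1.1 = c₁ ∧ q.2.1.1 = c₂)) ∧
      l₁.foldl (fun s q => s.image (fun p =>
          if p.1 = q.2.1
          then (p.1, (q.1.2.lookup n).elim p.2 (fun w => p.2.insert n w))
          else p)) ds ≠
      l₂.foldl (fun s q => s.image (fun p =>
          if p.1 = q.2.1
          then (p.1, (q.1.2.lookup n).elim p.2 (fun w => p.2.insert n w))
          else p)) ds := by
  refine ⟨uDS, 0, 1, 0, [(uE1, uT), (uE2, uT)], [(uE2, uT), (uE1, uT)],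
    ?_, ?_, ?_, uMem, ?_, ?_⟩
  · decide
  · decide
  · decide
  · intro q
    rw [← uMem q]
    simp [List.mem_cons, or_comm]
  · decide
end

section
/- Version-guarded add migrations recover correctly from interruption: fix an entity kind c, a property name n, a property value v, a distinguished property name 'version' whose values are natural numbers, and a version number k. The guarded add migration replaces each binding (κ ↦ π) whose key κ has kind c and whose value π assigns version k by (κ ↦ π′), where π′ is π with property n set to v and property 'version' set to k+1 (both create-or-replace), and leaves all other bindings unchanged. Then for every data store state ds and every intermediate state ds′ obtained from ds by applying this per-entity update to an arbitrary subset of the qualifying entities of ds (an interrupted run), applying the full guarded add migration to ds′ yields the same data store state as applying the full guarded add migration directly to ds. In particular, the guarded add migration is idempotent. -/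
/-!
A data store state is modeled as a finite set of bindings
(entity key ↦ entity value) with pairwise distinct keys, where an
entity key is a pair (kind, id) and an entity value is a finite
partial map (`Finmap`) from property names to property values.  The
distinguished property name `ver` ("version") takes natural-number
values, embedded into the property values via `ι : ℕ → PVal`; every
entity value assigns a version number to `ver`.

An entity qualifies for the guarded migration if its kind is `c` and
its version is `k`.  The guarded add migration `M` replaces each
qualifying binding `(κ ↦ π)` by `(κ ↦ π[n ↦ v][ver ↦ ι (k+1)])`
(create-or-replace updates) and leaves all other bindings unchanged;
`upd` is the corresponding per-entity update.

The theorem states: for every data store state `ds` and every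
intermediate state obtained from `ds` by applying `upd` to an
arbitrary subset `S` of the qualifying entities of `ds` (an
interrupted run), applying `M` to the intermediate state yields the
same result as applying `M` directly to `ds`; in particular, `M` is
idempotent on `ds`.
-/
theorem guarded_add_recovers_from_interruption
    {Kind Id PName PVal : Type}
    [DecidableEq Kind] [DecidableEq Id] [DecidableEq PName] [DecidableEq PVal]
    (c : Kind) (n ver : PName) (v : PVal) (ι : ℕ → PVal) (k : ℕ)
    (upd : (Kind × Id) × Finmap (fun _ : PName => PVal) →
           (Kind × Id) × Finmap (fun _ : PName => PVal))
    (hupd : ∀ p, upd p = (p.1, (p.2.insert n v).insert ver (ι (k + 1))))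
    (M : Finset ((Kind × Id) × Finmap (fun _ : PName => PVal)) →
         Finset ((Kind × Id) × Finmap (fun _ : PName => PVal)))
    (hM : ∀ s, M s = s.image (fun p =>
      if p.1.1 = c ∧ p.2.lookup ver = some (ι k) then upd p else p)) :
    ∀ ds : Finset ((Kind × Id) × Finmap (fun _ : PName => PVal)),
      (∀ p ∈ ds, ∀ q ∈ ds, p.1 = q.1 → p = q) →
      (∀ p ∈ ds, ∃ m : ℕ, p.2.lookup ver = some (ι m)) →
      (∀ S ⊆ ds, (∀ p ∈ S, p.1.1 = c ∧ p.2.lookup ver = some (ι k)) →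
        M ((ds \ S) ∪ S.image upd) = M ds) ∧
      M (M ds) = M ds := by
  classical
  intro ds _ _
  set f : ((Kind × Id) × Finmap (fun _ : PName => PVal)) →
      ((Kind × Id) × Finmap (fun _ : PName => PVal)) :=
    fun p => if p.1.1 = c ∧ p.2.lookup ver = some (ι k) then upd p else p with hfdef
  have updval : ∀ π : Finmap (fun _ : PName => PVal),
      (((π.insert n v).insert ver (ι (k+1))).insert n v).insert ver (ι (k+1))
        = (π.insert n v).insert ver (ι (k+1)) := by
    intro π
    by_cases hnv : n = ver
    · subst hnv; simp [Finmap.insert_insert]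
    · rw [Finmap.insert_insert_of_ne _ (Ne.symm hnv), Finmap.insert_insert,
        Finmap.insert_insert]
  have key : ∀ p, f (f p) = f p := by
    intro p
    by_cases h : p.1.1 = c ∧ p.2.lookup ver = some (ι k)
    · have h1 : f p = upd p := if_pos h
      rw [h1]
      by_cases h2 : (upd p).1.1 = c ∧ (upd p).2.lookup ver = some (ι k)
      · have h3 : f (upd p) = upd (upd p) := if_pos h2
        rw [h3, hupd (upd p), hupd p]
        exact Prod.ext rfl (updval p.2)
      · exact if_neg h2
    · have h1 : f p = p := if_neg h
      rw [h1, h1]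
  have himg : ∀ s, M s = s.image f := hM
  constructor
  · intro S hS hq
    have hfu : ∀ p ∈ S, f (upd p) = upd p := by
      intro p hp
      have h1 : f p = upd p := if_pos (hq p hp)
      calc f (upd p) = f (f p) := by rw [h1]
        _ = f p := key p
        _ = upd p := h1
    rw [himg, himg, Finset.image_union, Finset.image_image]
    have : Finset.image (f ∘ upd) S = Finset.image f S :=
      Finset.image_congr (fun p hp => (hfu p hp).trans (if_pos (hq p hp)).symm)
    rw [this, ← Finset.image_union, Finset.sdiff_union_of_subset hS]
  · rw [himg, himg ds, Finset.image_image]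
    exact Finset.image_congr (fun p _ => key p)
end
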